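/- For P = z(z^10 - 11z^5 - 1), M = z^30 - 522 z^25 - 10005 z^20 - 10005 z^10 + 522 z^5 + 1, the identity (11 * 125 / 25) M = 90 P P' P'' - 36 P^2 P''' - 55 (P')^3 holds, i.e. 55 M = 90 P P' P'' - 36 P^2 P''' - 55 (P')^3. -/

import Mathlib

open Polynomial

set_option maxHeartbeats 2000000 in
theorem M_from_P_identity :
    let P : ℚ[X] := X * (X^10 - 11 * X^5 - 1)
    let M : ℚ[X] := X^30 - 522 * X^25 - 10005 * X^20 - 10005 * X^10 + 522 * X^5 + 1
    55 * M = 90 * P * (derivative P) * (derivative (derivative P)) -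
      36 * P^2 * (derivative (derivative (derivative P))) - 55 * (derivative P)^3 := by
  intro P M
  have hC : ∀ n : ℕ, (C (n:ℚ) : ℚ[X]) = (n:ℚ[X]) := fun n => C_eq_natCast n
  have c3 := hC 3; have c4 := hC 4; have c5 := hC 5; have c8 := hC 8
  have c9 := hC 9; have c10 := hC 10
  push_cast at c3 c4 c5 c8 c9 c10
  have h1 : derivative P = 11 * X^10 - 66 * X^5 - 1 := by
    simp [P]; rw [c4, c9]; ring
  have h2 : derivative (11 * X^10 - 66 * X^5 - 1 : ℚ[X]) = 110 * X^9 - 330 * X^4 := by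
    simp; rw [c4, c9]; ring
  have h3 : derivative (110 * X^9 - 330 * X^4 : ℚ[X]) = 990 * X^8 - 1320 * X^3 := by
    simp; rw [c3, c8]; ring
  rw [h1, h2, h3]
  simp only [P, M]
  ring
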